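/- A connected simple graph G on n ≥ 2 vertices has metric dimension 1 if and only if G is isomorphic to the path graph P_n. -/
import Mathlib

/-- `W` is a resolving set for `G`: distinct vertices have distinct
distance vectors to the elements of `W`. -/
def IsResolving {V : Type*} (G : SimpleGraph V) (W : Set V) : Prop :=
  ∀ u v : V, (∀ w ∈ W, G.dist u w = G.dist v w) → u = v

/-- The metric dimension of `G`: the minimum cardinality of a resolving set. -/
noncomputable def metricDim {V : Type*} [Fintype V] (G : SimpleGraph V) : ℕ :=
  sInf {n | ∃ W : Finset V, IsResolving G (↑W) ∧ W.card = n}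

open SimpleGraph

/-- Lipschitz functions along walks. -/
lemma abs_sub_le_walk_length {V : Type*} {G : SimpleGraph V} (f : V → ℤ)
    (hf : ∀ u v, G.Adj u v → |f u - f v| ≤ 1) {u v : V} (p : G.Walk u v) :
    |f u - f v| ≤ p.length := by
  induction p with
  | nil => simp
  | cons h p ih =>
    rename_i a b c
    have h1 := hf a b h
    have := abs_sub_abs_le_abs_sub (f a - f c) (f b - f c)
    have habs : |f a - f c| ≤ |f b - f c| + 1 := by
      have := abs_sub (f a - f c) (f b - f c)
      calc |f a - f c| = |(f b - f c) + (f a - f b)| := by ring_nf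
        _ ≤ |f b - f c| + |f a - f b| := abs_add_le _ _
        _ ≤ |f b - f c| + 1 := by linarith
    simp only [SimpleGraph.Walk.length_cons]
    push_cast
    linarith

lemma abs_sub_le_dist {V : Type*} {G : SimpleGraph V} (f : V → ℤ)
    (hf : ∀ u v, G.Adj u v → |f u - f v| ≤ 1) {u v : V} (hr : G.Reachable u v) :
    |f u - f v| ≤ G.dist u v := by
  obtain ⟨p, hp⟩ := hr.exists_walk_length_eq_dist
  rw [← hp]; exact abs_sub_le_walk_length f hf p

lemma exists_adj_dist_pred {V : Type*} {G : SimpleGraph V} {v w : V} {d : ℕ}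
    (hG : G.Connected) (h : G.dist v w = d + 1) :
    ∃ u, G.Adj v u ∧ G.dist u w = d := by
  obtain ⟨p, hp⟩ := (hG v w).exists_walk_length_eq_dist
  rw [h] at hp
  cases p with
  | nil => simp at hp
  | cons hadj q =>
    rename_i u
    refine ⟨u, hadj, le_antisymm ?_ ?_⟩
    · have := G.dist_le q
      simp [SimpleGraph.Walk.length_cons] at hp
      omega
    · have htri := hG.dist_triangle (u := v) (v := u) (w := w)
      have : G.dist v u ≤ 1 := by
        rw [← SimpleGraph.dist_eq_one_iff_adj.mpr hadj]
      omega

lemma iso_dist_le {V V' : Type*} {G : SimpleGraph V} {H : SimpleGraph V'} (e : G ≃g H)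
    (u v : V) : H.dist (e u) (e v) ≤ G.dist u v := by
  by_cases hr : G.Reachable u v
  · obtain ⟨p, hp⟩ := hr.exists_walk_length_eq_dist
    have := H.dist_le (p.map e.toHom)
    rw [SimpleGraph.Walk.length_map, hp] at this
    exact this
  · rw [SimpleGraph.dist_eq_zero_of_not_reachable hr,
      SimpleGraph.dist_eq_zero_of_not_reachable (fun h => hr ?_)]
    have := h.map e.symm.toHom
    simpa using this

lemma iso_dist_eq {V V' : Type*} {G : SimpleGraph V} {H : SimpleGraph V'} (e : G ≃g H)
    (u v : V) : G.dist u v = H.dist (e u) (e v) := by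
  refine le_antisymm ?_ (iso_dist_le e u v)
  have := iso_dist_le e.symm (e u) (e v)
  simpa using this

lemma pathGraph_adj_abs {n : ℕ} {u v : Fin n} (h : (pathGraph n).Adj u v) :
    |(u.val : ℤ) - v.val| ≤ 1 := by
  rw [SimpleGraph.pathGraph_adj] at h
  rw [abs_sub_le_iff]
  rcases h with h | h <;> omega

lemma pathGraph_dist_zero {m : ℕ} (i : Fin (m + 1)) :
    (pathGraph (m + 1)).dist i 0 = i.val := by
  refine le_antisymm ?_ ?_
  · obtain ⟨k, hk⟩ := i
    induction k with
    | zero =>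
      have : (⟨0, hk⟩ : Fin (m+1)) = 0 := rfl
      rw [this]; simp
    | succ j ih =>
      have hj : j < m + 1 := by omega
      have hadj : (pathGraph (m + 1)).Adj ⟨j + 1, hk⟩ ⟨j, hj⟩ := by
        rw [SimpleGraph.pathGraph_adj]; right; simp
      have htri := (pathGraph_connected m).dist_triangle
        (u := (⟨j + 1, hk⟩ : Fin (m+1))) (v := ⟨j, hj⟩) (w := 0)
      have h1 : (pathGraph (m + 1)).dist ⟨j + 1, hk⟩ ⟨j, hj⟩ = 1 :=
        SimpleGraph.dist_eq_one_iff_adj.mpr hadj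
      have h2 := ih hj
      simp only [Fin.val_mk] at h2 ⊢
      omega
  · have := abs_sub_le_dist (G := pathGraph (m + 1)) (fun v => (v.val : ℤ))
      (fun u v h => pathGraph_adj_abs h)
      ((pathGraph_connected m) i 0)
    rw [abs_sub_le_iff] at this
    simp only [Fin.val_zero, Nat.cast_zero] at this
    omega

theorem metricDim_eq_one_iff_path {V : Type*} [Fintype V] (n : ℕ) (hn : 2 ≤ n)
    (hcard : Fintype.card V = n) (G : SimpleGraph V) (hG : G.Connected) :
    metricDim G = 1 ↔ Nonempty (G ≃g SimpleGraph.pathGraph n) := by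
  set S : Set ℕ := {k | ∃ W : Finset V, IsResolving G (↑W) ∧ W.card = k} with hSdef
  constructor
  · intro h
    have hne : S.Nonempty := by
      by_contra hemp
      rw [Set.not_nonempty_iff_eq_empty] at hemp
      rw [metricDim, ← hSdef, hemp] at h
      simp at h
    have h1 : 1 ∈ S := by
      have hm : sInf S = 1 := h
      have := Nat.sInf_mem hne
      rwa [hm] at this
    obtain ⟨W, hW, hW1⟩ := h1
    obtain ⟨w, rfl⟩ := Finset.card_eq_one.mp hW1
    -- f is injective
    have hf_inj : Function.Injective (fun v => G.dist v w) := by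
      intro u v huv
      exact hW u v (by intro w' hw'; simp at hw'; subst hw'; exact huv)
    -- downward closed
    have h_down : ∀ d : ℕ, ∀ v : V, G.dist v w = d → ∀ k ≤ d, ∃ u, G.dist u w = k := by
      intro d
      induction d with
      | zero => intro v hv k hk; exact ⟨v, by omega⟩
      | succ j ih =>
        intro v hv k hk
        rcases Nat.lt_or_ge k (j + 1) with hlt | hge
        · obtain ⟨u, _, hu⟩ := exists_adj_dist_pred hG hv
          exact ih u hu k (by omega)
        · exact ⟨v, by omega⟩
    have h_lt : ∀ v : V, G.dist v w < n := by
      intro v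
      by_contra hge
      push_neg at hge
      have g : ∀ k : Fin (n + 1), ∃ u, G.dist u w = k.val := fun k =>
        h_down (G.dist v w) v rfl k.val (by omega)
      choose g hg using g
      have hginj : Function.Injective g := by
        intro a b hab
        have : (a : ℕ) = b := by rw [← hg a, ← hg b, hab]
        exact Fin.ext this
      have := Fintype.card_le_of_injective g hginj
      simp only [Fintype.card_fin, hcard] at this
      omega
    set f' : V → Fin n := fun v => ⟨G.dist v w, h_lt v⟩ with hf'
    have hf'_inj : Function.Injective f' := by
      intro u v huv
      exact hf_inj (congrArg Fin.val huv)
    have hbij : Function.Bijective f' :=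
      (Fintype.bijective_iff_injective_and_card f').mpr ⟨hf'_inj, by simp [hcard]⟩
    have hlip : ∀ u v : V, G.Adj u v → |(G.dist u w : ℤ) - G.dist v w| ≤ 1 := by
      intro u v huv
      have h1 := hG.dist_triangle (u := u) (v := v) (w := w)
      have h2 := hG.dist_triangle (u := v) (v := u) (w := w)
      have e1 : G.dist u v = 1 := SimpleGraph.dist_eq_one_iff_adj.mpr huv
      have e2 : G.dist v u = 1 := SimpleGraph.dist_eq_one_iff_adj.mpr huv.symm
      rw [abs_sub_le_iff]
      omega
    have hadj_iff : ∀ u v : V, G.Adj u v ↔ (SimpleGraph.pathGraph n).Adj (f' u) (f' v) := by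
      intro u v
      rw [SimpleGraph.pathGraph_adj]
      constructor
      · intro huv
        have habs := hlip u v huv
        rw [abs_sub_le_iff] at habs
        have hne' : G.dist u w ≠ G.dist v w := fun hc => huv.ne (hf_inj hc)
        simp only [hf']
        omega
      · intro hpa
        simp only [hf'] at hpa
        rcases hpa with hpa | hpa
        · obtain ⟨u', hu'adj, hu'⟩ := exists_adj_dist_pred hG (d := G.dist u w)
            (v := v) (w := w) (by omega)
          have : u' = u := hf_inj hu'
          subst this
          exact hu'adj.symm
        · obtain ⟨u', hu'adj, hu'⟩ := exists_adj_dist_pred hG (d := G.dist v w)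
            (v := u) (w := w) (by omega)
          have : u' = v := hf_inj hu'
          subst this
          exact hu'adj
    exact ⟨{ toEquiv := Equiv.ofBijective f' hbij,
             map_rel_iff' := fun {u v} => (hadj_iff u v).symm }⟩
  · rintro ⟨e⟩
    obtain ⟨m, rfl⟩ : ∃ m, n = m + 1 := ⟨n - 1, by omega⟩
    set w : V := e.symm 0 with hw
    have hdist : ∀ u : V, G.dist u w = (e u).val := by
      intro u
      rw [iso_dist_eq e u w, hw, RelIso.apply_symm_apply]
      exact pathGraph_dist_zero (e u)
    have hres : IsResolving G (↑({w} : Finset V)) := by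
      intro u v huv
      have := huv w (by simp)
      rw [hdist u, hdist v] at this
      have : e u = e v := Fin.ext this
      exact e.toEquiv.injective this
    have h1 : 1 ∈ S := ⟨{w}, hres, by simp⟩
    have hle : sInf S ≤ 1 := Nat.sInf_le h1
    have h0 : (0 : ℕ) ∉ S := by
      rintro ⟨W, hW, hW0⟩
      rw [Finset.card_eq_zero] at hW0
      subst hW0
      obtain ⟨x, y, hxy⟩ := Fintype.exists_pair_of_one_lt_card (α := V) (by omega)
      exact hxy (hW x y (by simp))
    have hne0 : sInf S ≠ 0 := by
      intro hc
      rw [Nat.sInf_eq_zero] at hc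
      rcases hc with hc | hc
      · exact h0 hc
      · rw [hc] at h1; exact h1
    rw [metricDim, ← hSdef]
    omega
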